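/- Let φ denote the standard Gaussian density and Φ its cumulative distribution function, and for a > 0 define h(a) = 1 − 2φ(a)²/(1 − Φ(a)), the expected squared error of the optimal symmetric ternary quantizer with threshold a under a standard Gaussian prior. Then h is differentiable on (0, ∞) and h'(a) = 0 if and only if φ(a) = 2a(1 − Φ(a)). -/

import Mathlib

open MeasureTheory Set

/-- The standard Gaussian density. -/
noncomputable def gaussPdf (x : ℝ) : ℝ := (Real.sqrt (2 * Real.pi))⁻¹ * Real.exp (-x ^ 2 / 2)

/-- The standard Gaussian cumulative distribution function. -/
noncomputable def gaussCdf (a : ℝ) : ℝ := ∫ x in Iic a, gaussPdf x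

lemma gaussPdf_pos (x : ℝ) : 0 < gaussPdf x := by
  unfold gaussPdf
  positivity

lemma gaussPdf_eq : gaussPdf = fun x => (Real.sqrt (2 * Real.pi))⁻¹ * Real.exp (-(1/2) * x ^ 2) := by
  funext x; unfold gaussPdf; ring_nf

lemma continuous_gaussPdf : Continuous gaussPdf := by
  unfold gaussPdf; continuity

lemma integrable_gaussPdf : Integrable gaussPdf := by
  rw [gaussPdf_eq]
  exact (integrable_exp_neg_mul_sq (by norm_num : (0:ℝ) < 1/2)).const_mul _

lemma integral_gaussPdf : ∫ x, gaussPdf x = 1 := by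
  rw [gaussPdf_eq]
  rw [MeasureTheory.integral_const_mul, integral_gaussian]
  have : Real.pi / (1/2) = 2 * Real.pi := by ring
  rw [this]
  rw [inv_mul_cancel₀]
  positivity

lemma gaussCdf_lt_one (a : ℝ) : gaussCdf a < 1 := by
  have hsplit : gaussCdf a + ∫ x in Ioi a, gaussPdf x = 1 := by
    rw [gaussCdf, intervalIntegral.integral_Iic_add_Ioi integrable_gaussPdf.integrableOn integrable_gaussPdf.integrableOn, integral_gaussPdf]
  have hpos : 0 < ∫ x in Ioi a, gaussPdf x := by
    rw [setIntegral_pos_iff_support_of_nonneg_ae]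
    · have hs : Function.support gaussPdf = univ := by
        ext x; simp [(gaussPdf_pos x).ne']
      rw [hs, univ_inter, Real.volume_Ioi]
      simp
    · filter_upwards with x using (gaussPdf_pos x).le
    · exact integrable_gaussPdf.integrableOn
  linarith

lemma hasDerivAt_gaussCdf (a : ℝ) : HasDerivAt gaussCdf (gaussPdf a) a := by
  have key : gaussCdf = fun x => gaussCdf 0 + ∫ t in (0:ℝ)..x, gaussPdf t := by
    funext x
    rw [← intervalIntegral.integral_Iic_sub_Iic integrable_gaussPdf.integrableOn integrable_gaussPdf.integrableOn]
    simp [gaussCdf]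
  rw [key]
  have hD : HasDerivAt (fun x => ∫ t in (0:ℝ)..x, gaussPdf t) (gaussPdf a) a :=
    intervalIntegral.integral_hasDerivAt_right
      integrable_gaussPdf.intervalIntegrable
      (continuous_gaussPdf.stronglyMeasurableAtFilter _ _)
      continuous_gaussPdf.continuousAt
  exact hD.const_add _

lemma hasDerivAt_gaussPdf (a : ℝ) : HasDerivAt gaussPdf (-a * gaussPdf a) a := by
  have h1 : HasDerivAt (fun x : ℝ => -x^2/2) (-a) a := by
    have := ((hasDerivAt_pow 2 a).neg.div_const 2)
    exact this.congr_deriv (by norm_num; ring)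
  have h2 := (h1.exp).const_mul (Real.sqrt (2 * Real.pi))⁻¹
  have heq : -a * gaussPdf a = (Real.sqrt (2 * Real.pi))⁻¹ * (Real.exp (-a^2/2) * -a) := by
    unfold gaussPdf; ring
  rw [heq]
  exact h2

/-- The expected squared error `h(a) = 1 - 2φ(a)²/(1 - Φ(a))` of the optimal symmetric
ternary quantizer is differentiable on `(0, ∞)`, and its derivative vanishes at `a`
if and only if `φ(a) = 2a(1 - Φ(a))`. -/
theorem stmt_14 (h : ℝ → ℝ)
    (hh : ∀ a : ℝ, h a = 1 - 2 * gaussPdf a ^ 2 / (1 - gaussCdf a)) :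
    ∀ a ∈ Ioi (0 : ℝ), DifferentiableAt ℝ h a ∧
      (deriv h a = 0 ↔ gaussPdf a = 2 * a * (1 - gaussCdf a)) := by
  have hfun : h = fun a => 1 - 2 * gaussPdf a ^ 2 / (1 - gaussCdf a) := funext hh
  subst hfun
  intro a ha
  have hp : 0 < gaussPdf a := gaussPdf_pos a
  have hD : 0 < 1 - gaussCdf a := by linarith [gaussCdf_lt_one a]
  set p := gaussPdf a with hpdef
  set D := 1 - gaussCdf a with hDdef
  have hnum : HasDerivAt (fun x => 2 * gaussPdf x ^ 2) (2 * (2 * p ^ 1 * (-a * p))) a :=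
    ((hasDerivAt_gaussPdf a).pow 2).const_mul 2
  have hden : HasDerivAt (fun x => 1 - gaussCdf x) (-p) a := by
    simpa using (hasDerivAt_gaussCdf a).const_sub 1
  have hdiv := hnum.div hden hD.ne'
  have H := hdiv.const_sub 1
  refine ⟨H.differentiableAt, ?_⟩
  have hderiv : deriv (fun a => 1 - 2 * gaussPdf a ^ 2 / (1 - gaussCdf a)) a
      = (2 * p ^ 2 / D ^ 2) * (2 * a * D - p) := by
    have H' := H.deriv
    simp only [Pi.div_apply] at H'
    rw [← hpdef, ← hDdef] at H'
    rw [H']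
    field_simp
    ring
  rw [hderiv, mul_eq_zero]
  have hC : (2 * p ^ 2 / D ^ 2) ≠ 0 := by positivity
  simp only [hC, false_or]
  constructor <;> intro h' <;> linarith
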